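/- Let G = M(K_3) be the Mycielskian of the complete graph K_3, i.e., the graph with vertex set {a^u, a^v, b^u, b^v, c^u, c^v, w} and edge set {a^v b^v, a^v c^v, b^v c^v, a^u b^v, a^u c^v, b^u a^v, b^u c^v, c^u a^v, c^u b^v, a^u w, b^u w, c^u w}. Then α∘(G) = 4, χ_c(G) = 4, and χ(G) = 4. -/

import Mathlib

open SimpleGraph

/-- A list of vertices forms a cycle of `G` (single edges count as cycles of length 2):
at least two vertices, no repetitions, and consecutive vertices (cyclically) adjacent. -/
def IsCycleList {V : Type*} (G : SimpleGraph V) (l : List V) : Prop :=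
  2 ≤ l.length ∧ l.Nodup ∧
    ∀ i : Fin l.length,
      G.Adj (l.get i) (l.get ⟨((i : ℕ) + 1) % l.length, Nat.mod_lt _ i.pos⟩)

/-- A cycle of `G` is monotonic for a circular ordering `σ` of the vertices if, after a
suitable rotation, its vertices appear in increasing order of position, i.e. the vertices
`u_1, …, u_k, u_1` of the cycle appear in this cyclic order in `σ`. -/
def IsMonotonicCycle {V : Type*} [Fintype V] (G : SimpleGraph V)
    (σ : V ≃ Fin (Fintype.card V)) (l : List V) : Prop :=
  IsCycleList G l ∧ ∃ r : ℕ, ((l.rotate r).map fun x => (σ x : ℕ)).Chain' (· < ·)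

/-- The circular altitude of `G`: the largest `k` such that every circular ordering of
the vertices of `G` contains a monotonic cycle with at least `k` vertices. -/
noncomputable def circAltitude {V : Type*} [Fintype V] (G : SimpleGraph V) : ℕ :=
  sSup {k | ∀ σ : V ≃ Fin (Fintype.card V), ∃ l : List V,
    IsMonotonicCycle G σ l ∧ k ≤ l.length}

/-- A `(p,q)`-colouring of `G`: a map `c : V(G) → {1, …, p}` (encoded as `Fin p`) such
that `q ≤ |c u − c v| ≤ p − q` for every edge `uv` of `G`. -/
def IsPQColoring {V : Type*} (G : SimpleGraph V) (p q : ℕ) (c : V → Fin p) : Prop :=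
  ∀ a b : V, G.Adj a b →
    (q : ℤ) ≤ |((c a : ℕ) : ℤ) - ((c b : ℕ) : ℤ)| ∧
      |((c a : ℕ) : ℤ) - ((c b : ℕ) : ℤ)| ≤ (p : ℤ) - (q : ℤ)

/-- The circular chromatic number `χ_c(G)`: the infimum of `p / q` over all pairs of
positive integers `(p, q)` for which `G` admits a `(p,q)`-colouring. -/
noncomputable def circChromNum {V : Type*} [Fintype V] (G : SimpleGraph V) : ℝ :=
  sInf {x : ℝ | ∃ p q : ℕ, 0 < p ∧ 0 < q ∧ x = (p : ℝ) / (q : ℝ) ∧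
    ∃ c : V → Fin p, IsPQColoring G p q c}

/-- The Mycielskian `M(G)` of a graph `G`: the vertex set is
`{w} ∪ {aᵘ : a ∈ V(G)} ∪ {aᵛ : a ∈ V(G)}`, encoded with `w = none`,
`aᵘ = some (Sum.inl a)` and `aᵛ = some (Sum.inr a)`.  The vertices `aᵛ` induce a copy of
`G`, the vertex `w` is adjacent to every `aᵘ`, and for every edge `ab` of `G` the edges
`aᵘbᵛ` and `bᵘaᵛ` are present; there are no other edges. -/
def mycielskian {V : Type*} (G : SimpleGraph V) : SimpleGraph (Option (V ⊕ V)) where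
  Adj x y :=
    match x, y with
    | none, some (Sum.inl _) => True
    | some (Sum.inl _), none => True
    | some (Sum.inr a), some (Sum.inr b) => G.Adj a b
    | some (Sum.inl a), some (Sum.inr b) => G.Adj a b
    | some (Sum.inr a), some (Sum.inl b) => G.Adj a b
    | _, _ => False
  symm := by
    constructor
    rintro (_ | (a | a)) (_ | (b | b)) h <;> first | trivial | exact h.symm
  loopless := by
    constructor
    rintro (_ | (a | a)) h <;> first | trivial | exact G.loopless.irrefl a h

/-! ### Auxiliary material -/
set_option maxRecDepth 8000

instance mycielskianDecidableAdj {V : Type*} (G : SimpleGraph V) [DecidableRel G.Adj] :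
    DecidableRel (mycielskian G).Adj := fun x y =>
  match x, y with
  | none, none => isFalse (fun h => h)
  | none, some (Sum.inl _) => isTrue trivial
  | none, some (Sum.inr _) => isFalse (fun h => h)
  | some (Sum.inl _), none => isTrue trivial
  | some (Sum.inr _), none => isFalse (fun h => h)
  | some (Sum.inl _), some (Sum.inl _) => isFalse (fun h => h)
  | some (Sum.inl a), some (Sum.inr b) => inferInstanceAs (Decidable (G.Adj a b))
  | some (Sum.inr a), some (Sum.inl b) => inferInstanceAs (Decidable (G.Adj a b))
  | some (Sum.inr a), some (Sum.inr b) => inferInstanceAs (Decidable (G.Adj a b))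

instance : DecidableRel (completeGraph (Fin 3)).Adj :=
  fun a b => inferInstanceAs (Decidable (a ≠ b))

abbrev Vmy : Type := Option (Fin 3 ⊕ Fin 3)

abbrev Gmy : SimpleGraph Vmy := mycielskian (completeGraph (Fin 3))

lemma cardVmy : Fintype.card Vmy = 7 := rfl

/-- decoding of the seven vertices -/
def vert : Fin 7 → Vmy :=
  ![none, some (Sum.inl 0), some (Sum.inl 1), some (Sum.inl 2),
    some (Sum.inr 0), some (Sum.inr 1), some (Sum.inr 2)]

/-- encoding of the seven vertices -/
def enc : Vmy → Fin 7
  | none => 0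
  | some (Sum.inl a) => ⟨1 + a.val, by omega⟩
  | some (Sum.inr a) => ⟨4 + a.val, by omega⟩

def Emy : Vmy ≃ Fin 7 where
  toFun := enc
  invFun := vert
  left_inv := by decide
  right_inv := by decide

/-- The construction lemma: four vertices in increasing `σ`-position, cyclically
adjacent, give a monotonic cycle of length 4. -/
lemma build {V : Type*} [Fintype V] (G : SimpleGraph V) (σ : V ≃ Fin (Fintype.card V))
    (x y z w : V) (h1 : σ x < σ y) (h2 : σ y < σ z) (h3 : σ z < σ w)
    (a1 : G.Adj x y) (a2 : G.Adj y z) (a3 : G.Adj z w) (a4 : G.Adj w x) :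
    ∃ l : List V, IsMonotonicCycle G σ l ∧ 4 ≤ l.length := by
  have hne : ∀ a b : V, σ a < σ b → a ≠ b := by
    rintro a b h rfl; exact lt_irrefl _ h
  refine ⟨[x, y, z, w], ⟨⟨by simp, ?_, ?_⟩, 0, ?_⟩, by simp⟩
  · simp [hne _ _ h1, hne _ _ (h1.trans h2), hne _ _ ((h1.trans h2).trans h3),
      hne _ _ h2, hne _ _ (h2.trans h3), hne _ _ h3]
  · intro i
    fin_cases i
    · simpa using a1
    · simpa using a2
    · simpa using a3
    · simpa using a4
  · simp only [List.rotate_zero, List.map_cons, List.map_nil, List.isChain_cons_cons,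
      List.isChain_singleton, and_true, List.Chain']
    exact ⟨h1, h2, h3⟩

def okT (i0 i1 i2 i3 i4 i5 i6 : Fin 7) : Prop :=
  (i0 < i1 ∧ i1 < i5 ∧ i5 < i3) ∨
    (i0 < i1 ∧ i1 < i6 ∧ i6 < i2) ∨
    (i0 < i2 ∧ i2 < i4 ∧ i4 < i3) ∨
    (i0 < i2 ∧ i2 < i6 ∧ i6 < i1) ∨
    (i0 < i3 ∧ i3 < i4 ∧ i4 < i2) ∨
    (i0 < i3 ∧ i3 < i5 ∧ i5 < i1) ∨
    (i1 < i0 ∧ i0 < i2 ∧ i2 < i6) ∨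
    (i1 < i0 ∧ i0 < i3 ∧ i3 < i5) ∨
    (i1 < i5 ∧ i5 < i3 ∧ i3 < i0) ∨
    (i1 < i5 ∧ i5 < i4 ∧ i4 < i6) ∨
    (i1 < i6 ∧ i6 < i2 ∧ i2 < i0) ∨
    (i1 < i6 ∧ i6 < i4 ∧ i4 < i5) ∨
    (i2 < i0 ∧ i0 < i1 ∧ i1 < i6) ∨
    (i2 < i0 ∧ i0 < i3 ∧ i3 < i4) ∨
    (i2 < i4 ∧ i4 < i3 ∧ i3 < i0) ∨
    (i2 < i4 ∧ i4 < i5 ∧ i5 < i6) ∨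
    (i2 < i6 ∧ i6 < i1 ∧ i1 < i0) ∨
    (i2 < i6 ∧ i6 < i5 ∧ i5 < i4) ∨
    (i3 < i0 ∧ i0 < i1 ∧ i1 < i5) ∨
    (i3 < i0 ∧ i0 < i2 ∧ i2 < i4) ∨
    (i3 < i4 ∧ i4 < i2 ∧ i2 < i0) ∨
    (i3 < i4 ∧ i4 < i6 ∧ i6 < i5) ∨
    (i3 < i5 ∧ i5 < i1 ∧ i1 < i0) ∨
    (i3 < i5 ∧ i5 < i6 ∧ i6 < i4) ∨
    (i4 < i2 ∧ i2 < i0 ∧ i0 < i3) ∨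
    (i4 < i2 ∧ i2 < i6 ∧ i6 < i5) ∨
    (i4 < i3 ∧ i3 < i0 ∧ i0 < i2) ∨
    (i4 < i3 ∧ i3 < i5 ∧ i5 < i6) ∨
    (i4 < i5 ∧ i5 < i1 ∧ i1 < i6) ∨
    (i4 < i5 ∧ i5 < i6 ∧ i6 < i2) ∨
    (i4 < i6 ∧ i6 < i1 ∧ i1 < i5) ∨
    (i4 < i6 ∧ i6 < i5 ∧ i5 < i3) ∨
    (i5 < i1 ∧ i1 < i0 ∧ i0 < i3) ∨
    (i5 < i1 ∧ i1 < i6 ∧ i6 < i4) ∨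
    (i5 < i3 ∧ i3 < i0 ∧ i0 < i1) ∨
    (i5 < i3 ∧ i3 < i4 ∧ i4 < i6) ∨
    (i5 < i4 ∧ i4 < i2 ∧ i2 < i6) ∨
    (i5 < i4 ∧ i4 < i6 ∧ i6 < i1) ∨
    (i5 < i6 ∧ i6 < i2 ∧ i2 < i4) ∨
    (i5 < i6 ∧ i6 < i4 ∧ i4 < i3) ∨
    (i6 < i1 ∧ i1 < i0 ∧ i0 < i2) ∨
    (i6 < i1 ∧ i1 < i5 ∧ i5 < i4) ∨
    (i6 < i2 ∧ i2 < i0 ∧ i0 < i1) ∨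
    (i6 < i2 ∧ i2 < i4 ∧ i4 < i5) ∨
    (i6 < i4 ∧ i4 < i3 ∧ i3 < i5) ∨
    (i6 < i4 ∧ i4 < i5 ∧ i5 < i1) ∨
    (i6 < i5 ∧ i5 < i3 ∧ i3 < i4) ∨
    (i6 < i5 ∧ i5 < i4 ∧ i4 < i2)

set_option synthInstance.maxSize 8000 in
set_option synthInstance.maxHeartbeats 4000000 in
instance okT.dec (i0 i1 i2 i3 i4 i5 i6 : Fin 7) : Decidable (okT i0 i1 i2 i3 i4 i5 i6) := by
  unfold okT; infer_instance

set_option maxRecDepth 10000 in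
set_option synthInstance.maxSize 2000 in
set_option synthInstance.maxHeartbeats 1000000 in
set_option maxHeartbeats 8000000 in
theorem allOrder : ∀ i0 i1 : Fin 7, i0 ≠ i1 → ∀ i2 : Fin 7, i0 ≠ i2 → i1 ≠ i2 →
    ∀ i3 : Fin 7, i0 ≠ i3 → i1 ≠ i3 → i2 ≠ i3 →
    ∀ i4 : Fin 7, i0 ≠ i4 → i1 ≠ i4 → i2 ≠ i4 → i3 ≠ i4 →
    ∀ i5 : Fin 7, i0 ≠ i5 → i1 ≠ i5 → i2 ≠ i5 → i3 ≠ i5 → i4 ≠ i5 →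
    ∀ i6 : Fin 7, i0 ≠ i6 → i1 ≠ i6 → i2 ≠ i6 → i3 ≠ i6 → i4 ≠ i6 → i5 ≠ i6 →
    okT i0 i1 i2 i3 i4 i5 i6 := by
  decide

/-- Every circular ordering of `M(K₃)` has a monotonic cycle with at least 4 vertices. -/
lemma fourMem : ∀ σ : Vmy ≃ Fin (Fintype.card Vmy),
    ∃ l : List Vmy, IsMonotonicCycle Gmy σ l ∧ 4 ≤ l.length := by
  intro σ
  set P : Fin 7 → Fin 7 := fun k => Fin.cast cardVmy (σ (vert k)) with hP
  have hPinj : Function.Injective P := by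
    intro a b h
    have : vert a = vert b := σ.injective (Fin.cast_injective _ h)
    have hvi : Function.Injective vert := Emy.symm.injective
    exact hvi this
  have hne : ∀ j k : Fin 7, j ≠ k → P j ≠ P k := fun _ _ h h' => h (hPinj h')
  have h := allOrder (P 0) (P 1) (hne 0 1 (by decide)) (P 2) (hne 0 2 (by decide)) (hne 1 2 (by decide)) (P 3) (hne 0 3 (by decide)) (hne 1 3 (by decide)) (hne 2 3 (by decide)) (P 4) (hne 0 4 (by decide)) (hne 1 4 (by decide)) (hne 2 4 (by decide)) (hne 3 4 (by decide)) (P 5) (hne 0 5 (by decide)) (hne 1 5 (by decide)) (hne 2 5 (by decide)) (hne 3 5 (by decide)) (hne 4 5 (by decide)) (P 6) (hne 0 6 (by decide)) (hne 1 6 (by decide)) (hne 2 6 (by decide)) (hne 3 6 (by decide)) (hne 4 6 (by decide)) (hne 5 6 (by decide))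
  have cl : ∀ {j k : Fin 7}, P j < P k → σ (vert j) < σ (vert k) := fun h => h
  rw [okT] at h
  rcases h with h|h|h|h|h|h|h|h|h|h|h|h|h|h|h|h|h|h|h|h|h|h|h|h|h|h|h|h|h|h|h|h|h|h|h|h|h|h|h|h|h|h|h|h|h|h|h|h <;>
    exact build Gmy σ _ _ _ _ (cl h.1) (cl h.2.1) (cl h.2.2)
      (by decide) (by decide) (by decide) (by decide)

/-- Rotating a cycle list gives a cycle list. -/
lemma IsCycleList.rotate {V : Type*} {G : SimpleGraph V} {l : List V}
    (h : IsCycleList G l) (r : ℕ) : IsCycleList G (l.rotate r) := by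
  obtain ⟨h2, hnd, hadj⟩ := h
  have hlen : (l.rotate r).length = l.length := List.length_rotate l r
  refine ⟨by omega, ((l.rotate_perm r).nodup_iff).mpr hnd, ?_⟩
  rintro ⟨iv, hiv⟩
  rw [List.get_rotate, List.get_rotate]
  have hn : 0 < l.length := by omega
  have hidx : ((iv + 1) % (l.rotate r).length + r) % l.length
      = ((iv + r) % l.length + 1) % l.length := by
    rw [hlen, Nat.mod_add_mod, Nat.mod_add_mod, Nat.add_right_comm]
  have h2' := hadj ⟨(iv + r) % l.length, Nat.mod_lt _ hn⟩
  convert h2' using 2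
  exact Fin.ext hidx

/-- the canonical "bad" ordering : w, u₀, u₁, u₂, v₀, v₁, v₂ -/
def σ₀ : Vmy ≃ Fin (Fintype.card Vmy) := Emy.trans (finCongr cardVmy.symm)

abbrev A0 : Fin 7 → Fin 7 → Prop := fun i j => Gmy.Adj (vert i) (vert j)

def PosCyc (q : List (Fin 7)) : Prop :=
  ∀ i : Fin q.length, A0 (q.get i) (q.get ⟨((i : ℕ) + 1) % q.length, Nat.mod_lt _ i.pos⟩)

instance : DecidablePred PosCyc := fun q => by
  unfold PosCyc; infer_instance

lemma noBig : ∀ q ∈ (List.finRange 7).sublists, 5 ≤ q.length → ¬ PosCyc q := by decide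

/-- For `σ₀` there is no monotonic cycle with 5 or more vertices. -/
lemma upperAux (l : List Vmy) (h : IsMonotonicCycle Gmy σ₀ l) : l.length ≤ 4 := by
  by_contra hlen
  push_neg at hlen
  obtain ⟨hc, r, hchain⟩ := h
  set l' : List Vmy := l.rotate r with hl'
  have hc' : IsCycleList Gmy l' := hc.rotate r
  set q : List (Fin 7) := l'.map Emy with hq
  have hqlen : q.length = l.length := by
    rw [hq, List.length_map, hl', List.length_rotate]
  -- the chain condition
  have hchain' : q.Chain' (· < ·) := by
    unfold List.Chain' at hchain ⊢
    rw [hq, List.isChain_map]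
    rw [List.isChain_map] at hchain
    refine hchain.imp ?_
    intro a b hab
    exact hab
  have hpw : q.Pairwise (· < ·) := List.isChain_iff_pairwise.mp hchain'
  -- q is a sublist of finRange 7
  haveI : IsAntisymm (Fin 7) (· < ·) :=
    ⟨fun a b h1 h2 => absurd (h1.trans h2) (lt_irrefl a)⟩
  have hsub : List.Sublist q (List.finRange 7) := by
    refine List.sublist_of_subperm_of_pairwise ?_ hpw ?_
    · exact (List.Nodup.subperm (hpw.imp ne_of_lt) (fun x _ => List.mem_finRange x))
    · exact List.pairwise_lt_finRange 7
  -- q is a position cycle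
  have hv : ∀ x : Vmy, vert (Emy x) = x := fun x => Emy.left_inv x
  have hpc : PosCyc q := by
    intro i
    have hlen2 : q.length = l'.length := by rw [hq, List.length_map]
    have hget : ∀ (j : ℕ) (hj : j < q.length), q.get ⟨j, hj⟩
        = Emy (l'.get ⟨j, by omega⟩) := by
      intro j hj
      simp only [hq, List.get_eq_getElem, List.getElem_map]
    have hmlt : ((i : ℕ) + 1) % q.length < q.length := Nat.mod_lt _ i.pos
    have e1 : q.get i = Emy (l'.get ⟨(i : ℕ), by omega⟩) := by
      rw [← hget (i : ℕ) i.isLt]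
    rw [e1, hget _ hmlt]
    show Gmy.Adj (vert (Emy _)) (vert (Emy _))
    rw [hv, hv]
    have h2' := hc'.2.2 ⟨(i : ℕ), by omega⟩
    convert h2' using 2
    exact Fin.ext (by simp only [hlen2])
  exact noBig q (List.mem_sublists.mpr hsub) (by omega) hpc

/-- arithmetic core for the circular chromatic lower bound -/
theorem pq_lb (p q : ℕ) (w a1 a2 a3 b1 b2 b3 : ℤ)
    (hw : 0 ≤ w ∧ w < p) (ha1 : 0 ≤ a1 ∧ a1 < p) (ha2 : 0 ≤ a2 ∧ a2 < p) (ha3 : 0 ≤ a3 ∧ a3 < p)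
    (hb1 : 0 ≤ b1 ∧ b1 < p) (hb2 : 0 ≤ b2 ∧ b2 < p) (hb3 : 0 ≤ b3 ∧ b3 < p)
    (e1 : (q:ℤ) ≤ b1 - b2 ∧ b1 - b2 ≤ p - q ∨ (q:ℤ) ≤ b2 - b1 ∧ b2 - b1 ≤ p - q)
    (e2 : (q:ℤ) ≤ b1 - b3 ∧ b1 - b3 ≤ p - q ∨ (q:ℤ) ≤ b3 - b1 ∧ b3 - b1 ≤ p - q)
    (e3 : (q:ℤ) ≤ b2 - b3 ∧ b2 - b3 ≤ p - q ∨ (q:ℤ) ≤ b3 - b2 ∧ b3 - b2 ≤ p - q)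
    (e4 : (q:ℤ) ≤ a1 - b2 ∧ a1 - b2 ≤ p - q ∨ (q:ℤ) ≤ b2 - a1 ∧ b2 - a1 ≤ p - q)
    (e5 : (q:ℤ) ≤ a1 - b3 ∧ a1 - b3 ≤ p - q ∨ (q:ℤ) ≤ b3 - a1 ∧ b3 - a1 ≤ p - q)
    (e6 : (q:ℤ) ≤ a2 - b1 ∧ a2 - b1 ≤ p - q ∨ (q:ℤ) ≤ b1 - a2 ∧ b1 - a2 ≤ p - q)
    (e7 : (q:ℤ) ≤ a2 - b3 ∧ a2 - b3 ≤ p - q ∨ (q:ℤ) ≤ b3 - a2 ∧ b3 - a2 ≤ p - q)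
    (e8 : (q:ℤ) ≤ a3 - b1 ∧ a3 - b1 ≤ p - q ∨ (q:ℤ) ≤ b1 - a3 ∧ b1 - a3 ≤ p - q)
    (e9 : (q:ℤ) ≤ a3 - b2 ∧ a3 - b2 ≤ p - q ∨ (q:ℤ) ≤ b2 - a3 ∧ b2 - a3 ≤ p - q)
    (f1 : (q:ℤ) ≤ w - a1 ∧ w - a1 ≤ p - q ∨ (q:ℤ) ≤ a1 - w ∧ a1 - w ≤ p - q)
    (f2 : (q:ℤ) ≤ w - a2 ∧ w - a2 ≤ p - q ∨ (q:ℤ) ≤ a2 - w ∧ a2 - w ≤ p - q)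
    (f3 : (q:ℤ) ≤ w - a3 ∧ w - a3 ≤ p - q ∨ (q:ℤ) ≤ a3 - w ∧ a3 - w ≤ p - q)
    (hlt : (p:ℤ) < 4 * q) : False := by
  omega

lemma abs_conv {p q A B : ℤ} (h : q ≤ |A - B| ∧ |A - B| ≤ p - q) :
    (q ≤ A - B ∧ A - B ≤ p - q) ∨ (q ≤ B - A ∧ B - A ≤ p - q) := by
  rcases abs_cases (A - B) with ⟨he, _⟩ | ⟨he, _⟩ <;> rw [he] at h <;> omega

/-- the 4-colouring of `M(K₃)` -/
def c4 : Vmy → Fin 4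
  | none => 3
  | some (Sum.inl a) => ⟨a.val, by omega⟩
  | some (Sum.inr a) => ⟨a.val, by omega⟩

instance : Decidable (IsPQColoring Gmy 4 1 c4) := by
  unfold IsPQColoring; infer_instance

lemma c4_valid : ∀ a b : Vmy, Gmy.Adj a b → c4 a ≠ c4 b := by decide

lemma c4_pq : IsPQColoring Gmy 4 1 c4 := by decide

set_option synthInstance.maxSize 2000 in
set_option synthInstance.maxHeartbeats 1000000 in
lemma noc3 : ∀ x0 x1 x2 x3 x4 x5 x6 : Fin 3,
    x4 ≠ x5 → x4 ≠ x6 → x5 ≠ x6 → x1 ≠ x5 → x1 ≠ x6 → x2 ≠ x4 → x2 ≠ x6 →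
    x3 ≠ x4 → x3 ≠ x5 → x0 ≠ x1 → x0 ≠ x2 → x0 ≠ x3 → False := by decide

lemma adj_vert : ∀ j k : Fin 7, A0 j k →
    Gmy.Adj (vert j) (vert k) := fun _ _ h => h

/-- the lower bound for p/q colourings -/
lemma pq_ge (p q : ℕ) (hp : 0 < p) (hq : 0 < q) (c : Vmy → Fin p)
    (hc : IsPQColoring Gmy p q c) : 4 * q ≤ p := by
  by_contra hlt
  push_neg at hlt
  have bound : ∀ x : Vmy, (0:ℤ) ≤ ((c x : ℕ) : ℤ) ∧ ((c x : ℕ) : ℤ) < p := by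
    intro x
    constructor
    · exact Int.ofNat_nonneg _
    · exact_mod_cast (c x).isLt
  refine pq_lb p q (c none) (c (some (Sum.inl 0))) (c (some (Sum.inl 1))) (c (some (Sum.inl 2)))
    (c (some (Sum.inr 0))) (c (some (Sum.inr 1))) (c (some (Sum.inr 2)))
    (bound _) (bound _) (bound _) (bound _) (bound _) (bound _) (bound _)
    (abs_conv (hc _ _ (by decide))) (abs_conv (hc _ _ (by decide)))
    (abs_conv (hc _ _ (by decide))) (abs_conv (hc _ _ (by decide)))
    (abs_conv (hc _ _ (by decide))) (abs_conv (hc _ _ (by decide)))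
    (abs_conv (hc _ _ (by decide))) (abs_conv (hc _ _ (by decide)))
    (abs_conv (hc _ _ (by decide))) (abs_conv (hc _ _ (by decide)))
    (abs_conv (hc _ _ (by decide))) (abs_conv (hc _ _ (by decide)))
    (by exact_mod_cast hlt)

/-- Let `G = M(K₃)` be the Mycielskian of the complete graph `K₃` (a vertex `w`, vertices
`aᵘ, bᵘ, cᵘ` and a triangle `aᵛ, bᵛ, cᵛ`, with the edges described in the construction).
Then `α∘(G) = 4`, `χ_c(G) = 4` and `χ(G) = 4`. -/
theorem mycielskian_K3 :
    circAltitude (mycielskian (completeGraph (Fin 3))) = 4 ∧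
    circChromNum (mycielskian (completeGraph (Fin 3))) = 4 ∧
    (mycielskian (completeGraph (Fin 3))).chromaticNumber = (4 : ℕ∞) := by
  refine ⟨?_, ?_, ?_⟩
  · -- circular altitude
    have hmem : 4 ∈ {k | ∀ σ : Vmy ≃ Fin (Fintype.card Vmy), ∃ l : List Vmy,
        IsMonotonicCycle Gmy σ l ∧ k ≤ l.length} := fourMem
    have hub : ∀ k ∈ {k | ∀ σ : Vmy ≃ Fin (Fintype.card Vmy), ∃ l : List Vmy,
        IsMonotonicCycle Gmy σ l ∧ k ≤ l.length}, k ≤ 4 := by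
      intro k hk
      by_contra hk4
      push_neg at hk4
      obtain ⟨l, hml, hkl⟩ := hk σ₀
      have := upperAux l hml
      omega
    exact le_antisymm (csSup_le ⟨4, hmem⟩ hub) (le_csSup ⟨4, hub⟩ hmem)
  · -- circular chromatic number
    have hmem : (4:ℝ) ∈ {x : ℝ | ∃ p q : ℕ, 0 < p ∧ 0 < q ∧ x = (p : ℝ) / (q : ℝ) ∧
        ∃ c : Vmy → Fin p, IsPQColoring Gmy p q c} := by
      refine ⟨4, 1, by norm_num, by norm_num, by norm_num, c4, c4_pq⟩
    have hlb : ∀ x ∈ {x : ℝ | ∃ p q : ℕ, 0 < p ∧ 0 < q ∧ x = (p : ℝ) / (q : ℝ) ∧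
        ∃ c : Vmy → Fin p, IsPQColoring Gmy p q c}, (4:ℝ) ≤ x := by
      rintro x ⟨p, q, hp, hq, rfl, c, hc⟩
      have h4 : 4 * q ≤ p := pq_ge p q hp hq c hc
      rw [le_div_iff₀ (by exact_mod_cast hq)]
      exact_mod_cast h4
    exact le_antisymm (csInf_le ⟨4, hlb⟩ hmem) (le_csInf ⟨4, hmem⟩ hlb)
  · -- chromatic number
    have col4 : Gmy.Colorable 4 := ⟨Coloring.mk c4 (fun hab => c4_valid _ _ hab)⟩
    have no3 : ¬ Gmy.Colorable 3 := by
      rintro ⟨C⟩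
      exact noc3 (C none) (C (some (Sum.inl 0))) (C (some (Sum.inl 1))) (C (some (Sum.inl 2)))
        (C (some (Sum.inr 0))) (C (some (Sum.inr 1))) (C (some (Sum.inr 2)))
        (C.valid (by decide)) (C.valid (by decide)) (C.valid (by decide))
        (C.valid (by decide)) (C.valid (by decide)) (C.valid (by decide))
        (C.valid (by decide)) (C.valid (by decide)) (C.valid (by decide))
        (C.valid (by decide)) (C.valid (by decide)) (C.valid (by decide))
    refine le_antisymm ?_ ?_
    · have := col4.chromaticNumber_le
      exact_mod_cast this
    · have h3 : ¬ Gmy.chromaticNumber ≤ (3:ℕ) := fun h =>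
        no3 (chromaticNumber_le_iff_colorable.mp h)
      have h3' : (3:ℕ∞) < Gmy.chromaticNumber := by
        rw [not_le] at h3
        exact_mod_cast h3
      have := Order.add_one_le_of_lt h3'
      exact_mod_cast this
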